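/- For a monoidal functor G: M → V, the category Z^G(M) of pairs (V, c), where V is an object of V and c is a monoidal natural isomorphism c_X: V ⊗ G(X) → G(X) ⊗ V satisfying the tensor compatibility c_{X⊗Y} = (associators and) (c_X ⊗ Id_Y) ∘ (Id ⊗ c_Y) appropriately bracketed, is a monoidal category with (V,c^V) ⊗ (W,c^W) = (V⊗W, c^{V⊗W}) where c^{V⊗W}_X = α ∘ (c^V_X ⊗ Id_W) ∘ α^{-1} ∘ (Id_V ⊗ c^W_X) ∘ α, and the forgetful functor Z^G(M) → M (via representing data in V) is strict monoidal on the centralizing data. -/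

import Mathlib

open CategoryTheory MonoidalCategory CategoryTheory.Functor

variable {M V : Type*} [Category M] [MonoidalCategory M] [Category V]
  [MonoidalCategory V]

/-- An object of the Drinfeld center `Z^G(M)` of `M` relative to a monoidal functor
`G : M ⥤ V`: an object `V₀` of `V` together with a monoidal natural isomorphism
`c_X : V₀ ⊗ G(X) ≅ G(X) ⊗ V₀`. -/
structure RelCenter (G : M ⥤ V) [G.Monoidal] where
  V : V
  β : ∀ X : M, V ⊗ G.obj X ≅ G.obj X ⊗ V
  natural : ∀ {X Y : M} (f : X ⟶ Y),
    (V ◁ G.map f) ≫ (β Y).hom = (β X).hom ≫ (G.map f ▷ V)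
  monoidal : ∀ X Y : M,
    (β (X ⊗ Y)).hom = (V ◁ OplaxMonoidal.δ G X Y) ≫
      (α_ V (G.obj X) (G.obj Y)).inv ≫ ((β X).hom ▷ G.obj Y) ≫
      (α_ (G.obj X) V (G.obj Y)).hom ≫ (G.obj X ◁ (β Y).hom) ≫
      (α_ (G.obj X) (G.obj Y) V).inv ≫ (LaxMonoidal.μ G X Y ▷ V)

variable {G : M ⥤ V} [G.Monoidal]

instance : Category (RelCenter G) where
  Hom p q := { f : p.V ⟶ q.V //
    ∀ X : M, (f ▷ G.obj X) ≫ (q.β X).hom = (p.β X).hom ≫ (G.obj X ◁ f) }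
  id p := ⟨𝟙 p.V, fun X => by simp⟩
  comp {p q r} f g := ⟨f.1 ≫ g.1, fun X => by
    rw [comp_whiskerRight, Category.assoc, g.2, ← Category.assoc, f.2,
      Category.assoc, MonoidalCategory.whiskerLeft_comp]⟩
  id_comp f := Subtype.ext (Category.id_comp _)
  comp_id f := Subtype.ext (Category.comp_id _)
  assoc f g h := Subtype.ext (Category.assoc _ _ _)

/-- The candidate half-braiding on the tensor product of the underlying objects of
two objects of the relative center:
`c^{V⊗W}_X = α ∘ (c^V_X ⊗ Id) ∘ α⁻¹ ∘ (Id ⊗ c^W_X) ∘ α`. -/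
def tensorβ (p q : RelCenter G) (X : M) :
    (p.V ⊗ q.V) ⊗ G.obj X ≅ G.obj X ⊗ (p.V ⊗ q.V) :=
  α_ p.V q.V (G.obj X) ≪≫ whiskerLeftIso p.V (q.β X) ≪≫
    (α_ p.V (G.obj X) q.V).symm ≪≫ whiskerRightIso (p.β X) q.V ≪≫
    α_ (G.obj X) p.V q.V

/-- The candidate half-braiding on the unit object. -/
def unitβ (X : M) : 𝟙_ V ⊗ G.obj X ≅ G.obj X ⊗ 𝟙_ V :=
  λ_ (G.obj X) ≪≫ (ρ_ (G.obj X)).symm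



theorem tensorβ_natural (p q : RelCenter G) {X Y : M} (f : X ⟶ Y) :
    ((p.V ⊗ q.V) ◁ G.map f) ≫ (tensorβ p q Y).hom =
      (tensorβ p q X).hom ≫ (G.map f ▷ (p.V ⊗ q.V)) := by
  simp only [tensorβ, Iso.trans_hom, MonoidalCategory.whiskerLeftIso_hom, Iso.symm_hom, MonoidalCategory.whiskerRightIso_hom]
  calc
    _ = 𝟙 _ ⊗≫
      (p.V ◁ (q.V ◁ G.map f ≫ (q.β Y).hom)) ⊗≫
        (p.β Y).hom ▷ q.V ⊗≫ 𝟙 _ := by monoidal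
    _ = 𝟙 _ ⊗≫
      p.V ◁ (q.β X).hom ⊗≫
        ((p.V ◁ G.map f ≫ (p.β Y).hom) ▷ q.V) ⊗≫ 𝟙 _ := by
      rw [q.natural]; monoidal
    _ = _ := by rw [p.natural]; monoidal

theorem tensorβ_monoidal (p q : RelCenter G) (X Y : M) :
    (tensorβ p q (X ⊗ Y)).hom = ((p.V ⊗ q.V) ◁ OplaxMonoidal.δ G X Y) ≫
      (α_ (p.V ⊗ q.V) (G.obj X) (G.obj Y)).inv ≫
      ((tensorβ p q X).hom ▷ G.obj Y) ≫
      (α_ (G.obj X) (p.V ⊗ q.V) (G.obj Y)).hom ≫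
      (G.obj X ◁ (tensorβ p q Y).hom) ≫
      (α_ (G.obj X) (G.obj Y) (p.V ⊗ q.V)).inv ≫
      (LaxMonoidal.μ G X Y ▷ (p.V ⊗ q.V)) := by
  simp only [tensorβ, Iso.trans_hom, MonoidalCategory.whiskerLeftIso_hom, Iso.symm_hom, MonoidalCategory.whiskerRightIso_hom]
  rw [p.monoidal, q.monoidal]
  calc
    _ = 𝟙 _ ⊗≫
      ((p.V ⊗ q.V : V)) ◁ OplaxMonoidal.δ G X Y ⊗≫
        p.V ◁ (q.β X).hom ▷ G.obj Y ⊗≫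
          p.V ◁ (G.obj X ◁ (q.β Y).hom) ⊗≫
            (p.V ◁ (LaxMonoidal.μ G X Y ▷ q.V) ≫ p.V ◁ (OplaxMonoidal.δ G X Y ▷ q.V)) ⊗≫
              ((p.β X).hom ▷ G.obj Y) ▷ q.V ⊗≫
                (G.obj X ◁ (p.β Y).hom) ▷ q.V ⊗≫
                  LaxMonoidal.μ G X Y ▷ ((p.V ⊗ q.V : V)) ⊗≫ 𝟙 _ := by monoidal
    _ = 𝟙 _ ⊗≫
      ((p.V ⊗ q.V : V)) ◁ OplaxMonoidal.δ G X Y ⊗≫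
        p.V ◁ (q.β X).hom ▷ G.obj Y ⊗≫
          (_ ◁ (q.β Y).hom ≫ (p.β X).hom ▷ _) ⊗≫
            G.obj X ◁ (p.β Y).hom ▷ q.V ⊗≫
              LaxMonoidal.μ G X Y ▷ ((p.V ⊗ q.V : V)) ⊗≫ 𝟙 _ := by
        rw [← MonoidalCategory.whiskerLeft_comp, Functor.Monoidal.whiskerRight_μ_δ,
          MonoidalCategory.whiskerLeft_id]; monoidal
    _ = _ := by rw [whisker_exchange]; monoidal

theorem unitβ_natural {X Y : M} (f : X ⟶ Y) :
    ((𝟙_ V) ◁ G.map f) ≫ (unitβ (G := G) Y).hom =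
      (unitβ (G := G) X).hom ≫ (G.map f ▷ (𝟙_ V)) := by
  simp [unitβ]

theorem unitβ_monoidal (X Y : M) :
    (unitβ (G := G) (X ⊗ Y)).hom = ((𝟙_ V) ◁ OplaxMonoidal.δ G X Y) ≫
      (α_ (𝟙_ V) (G.obj X) (G.obj Y)).inv ≫
      ((unitβ (G := G) X).hom ▷ G.obj Y) ≫
      (α_ (G.obj X) (𝟙_ V) (G.obj Y)).hom ≫
      (G.obj X ◁ (unitβ (G := G) Y).hom) ≫
      (α_ (G.obj X) (G.obj Y) (𝟙_ V)).inv ≫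
      (LaxMonoidal.μ G X Y ▷ (𝟙_ V)) := by
  dsimp only [unitβ, Iso.trans_hom, Iso.symm_hom]
  calc
    _ = 𝟙 _ ⊗≫ (𝟙_ V ◁ OplaxMonoidal.δ G X Y ≫ (λ_ _).hom ≫ (ρ_ _).inv ≫
          LaxMonoidal.μ G X Y ▷ 𝟙_ V) ⊗≫ 𝟙 _ := by
      rw [leftUnitor_naturality_assoc, rightUnitor_inv_naturality_assoc,
        Functor.Monoidal.whiskerRight_δ_μ]; monoidal
    _ = _ := by monoidal

/-- tensor object -/
def tObj (p q : RelCenter G) : RelCenter G :=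
  ⟨p.V ⊗ q.V, tensorβ p q, tensorβ_natural p q, tensorβ_monoidal p q⟩

/-- unit object -/
def uObj : RelCenter G := ⟨𝟙_ V, unitβ, unitβ_natural, unitβ_monoidal⟩

theorem whiskerLeft_comm (p : RelCenter G) {q r : RelCenter G} (f : q ⟶ r) (X : M) :
    ((p.V ◁ f.1) ▷ G.obj X) ≫ (tensorβ p r X).hom =
      (tensorβ p q X).hom ≫ (G.obj X ◁ (p.V ◁ f.1)) := by
  simp only [tensorβ, Iso.trans_hom, MonoidalCategory.whiskerLeftIso_hom, Iso.symm_hom, MonoidalCategory.whiskerRightIso_hom]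
  calc
    _ = 𝟙 _ ⊗≫ p.V ◁ (f.1 ▷ G.obj X ≫ (r.β X).hom) ⊗≫ (p.β X).hom ▷ r.V ⊗≫ 𝟙 _ := by
      monoidal
    _ = 𝟙 _ ⊗≫ p.V ◁ (q.β X).hom ⊗≫
        (_ ◁ f.1 ≫ (p.β X).hom ▷ r.V) ⊗≫ 𝟙 _ := by
      rw [f.2]; monoidal
    _ = _ := by rw [whisker_exchange]; monoidal

theorem whiskerRight_comm {p q : RelCenter G} (f : p ⟶ q) (r : RelCenter G) (X : M) :
    ((f.1 ▷ r.V) ▷ G.obj X) ≫ (tensorβ q r X).hom =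
      (tensorβ p r X).hom ≫ (G.obj X ◁ (f.1 ▷ r.V)) := by
  simp only [tensorβ, Iso.trans_hom, MonoidalCategory.whiskerLeftIso_hom, Iso.symm_hom, MonoidalCategory.whiskerRightIso_hom]
  calc
    _ = 𝟙 _ ⊗≫ (f.1 ▷ _ ≫ q.V ◁ (r.β X).hom) ⊗≫ (q.β X).hom ▷ r.V ⊗≫ 𝟙 _ := by
      monoidal
    _ = 𝟙 _ ⊗≫ p.V ◁ (r.β X).hom ⊗≫
        ((f.1 ▷ G.obj X ≫ (q.β X).hom) ▷ r.V) ⊗≫ 𝟙 _ := by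
      rw [← whisker_exchange]; monoidal
    _ = _ := by rw [f.2]; monoidal

/-- isoMk -/
noncomputable def isoMk {p q : RelCenter G} (f : p ⟶ q) [inst : IsIso f.1] : p ≅ q where
  hom := f
  inv := ⟨inv f.1, fun X => by
    rw [← cancel_epi (f.1 ▷ G.obj X), ← cancel_mono (G.obj X ◁ f.1)]
    simp [f.2 X]
    exact (f.2 X).symm⟩
  hom_inv_id := Subtype.ext (IsIso.hom_inv_id _)
  inv_hom_id := Subtype.ext (IsIso.inv_hom_id _)

theorem associator_comm (p q r : RelCenter G) (X : M) :
    ((α_ p.V q.V r.V).hom ▷ G.obj X) ≫ (tensorβ p (tObj q r) X).hom =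
      (tensorβ (tObj p q) r X).hom ≫ (G.obj X ◁ (α_ p.V q.V r.V).hom) := by
  simp only [tObj, tensorβ, Iso.trans_hom, MonoidalCategory.whiskerLeftIso_hom, Iso.symm_hom,
    MonoidalCategory.whiskerRightIso_hom]
  monoidal

theorem leftUnitor_comm (p : RelCenter G) (X : M) :
    ((λ_ p.V).hom ▷ G.obj X) ≫ (p.β X).hom =
      (tensorβ (uObj (G := G)) p X).hom ≫ (G.obj X ◁ (λ_ p.V).hom) := by
  simp only [uObj, tensorβ, unitβ, Iso.trans_hom, MonoidalCategory.whiskerLeftIso_hom, Iso.symm_hom,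
    MonoidalCategory.whiskerRightIso_hom]
  calc
    _ = 𝟙 _ ⊗≫ (p.β X).hom ⊗≫ 𝟙 _ := by monoidal
    _ = _ := by monoidal

theorem rightUnitor_comm (p : RelCenter G) (X : M) :
    ((ρ_ p.V).hom ▷ G.obj X) ≫ (p.β X).hom =
      (tensorβ p (uObj (G := G)) X).hom ≫ (G.obj X ◁ (ρ_ p.V).hom) := by
  simp only [uObj, tensorβ, unitβ, Iso.trans_hom, MonoidalCategory.whiskerLeftIso_hom, Iso.symm_hom,
    MonoidalCategory.whiskerRightIso_hom]
  calc
    _ = 𝟙 _ ⊗≫ (p.β X).hom ⊗≫ 𝟙 _ := by monoidal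
    _ = _ := by monoidal


@[simp] theorem RelCenter.id_val (p : RelCenter G) : (𝟙 p : p ⟶ p).1 = 𝟙 p.V := rfl

@[simp] theorem RelCenter.comp_val {p q r : RelCenter G} (f : p ⟶ q) (g : q ⟶ r) :
    (f ≫ g).1 = f.1 ≫ g.1 := rfl

noncomputable instance relMonoidal : MonoidalCategory (RelCenter G) where
  tensorObj := tObj
  whiskerLeft p _ _ f := ⟨p.V ◁ f.1, whiskerLeft_comm p f⟩
  whiskerRight f r := ⟨f.1 ▷ r.V, whiskerRight_comm f r⟩
  tensorUnit := uObj
  associator p q r := _root_.isoMk ⟨(α_ p.V q.V r.V).hom, associator_comm p q r⟩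
    (inst := inferInstanceAs (IsIso (α_ p.V q.V r.V).hom))
  leftUnitor p := _root_.isoMk ⟨(λ_ p.V).hom, leftUnitor_comm p⟩
    (inst := inferInstanceAs (IsIso (λ_ p.V).hom))
  rightUnitor p := _root_.isoMk ⟨(ρ_ p.V).hom, rightUnitor_comm p⟩
    (inst := inferInstanceAs (IsIso (ρ_ p.V).hom))
  tensorHom_def f g := rfl
  id_tensorHom_id p q := Subtype.ext (by
    show (𝟙 p.V ▷ q.V) ≫ (p.V ◁ 𝟙 q.V) = 𝟙 (p.V ⊗ q.V)
    simp)
  tensorHom_comp_tensorHom f₁ f₂ g₁ g₂ := Subtype.ext (by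
    show (f₁.1 ▷ _ ≫ _ ◁ f₂.1) ≫ (g₁.1 ▷ _ ≫ _ ◁ g₂.1) =
      ((f₁.1 ≫ g₁.1) ▷ _) ≫ (_ ◁ (f₂.1 ≫ g₂.1))
    simp [MonoidalCategory.tensorHom_def, whisker_exchange_assoc])
  whiskerLeft_id p q := Subtype.ext (by
    show p.V ◁ 𝟙 q.V = 𝟙 (p.V ⊗ q.V); simp)
  id_whiskerRight p q := Subtype.ext (by
    show 𝟙 p.V ▷ q.V = 𝟙 (p.V ⊗ q.V); simp)
  associator_naturality f₁ f₂ f₃ := Subtype.ext (by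
    show ((f₁.1 ▷ _ ≫ _ ◁ f₂.1) ▷ _ ≫ _ ◁ f₃.1) ≫ (α_ _ _ _).hom =
      (α_ _ _ _).hom ≫ (f₁.1 ▷ _ ≫ _ ◁ (f₂.1 ▷ _ ≫ _ ◁ f₃.1))
    simp [MonoidalCategory.tensorHom_def, whisker_exchange_assoc])
  leftUnitor_naturality f := Subtype.ext (by
    show 𝟙_ V ◁ f.1 ≫ (λ_ _).hom = (λ_ _).hom ≫ f.1; simp)
  rightUnitor_naturality f := Subtype.ext (by
    show f.1 ▷ 𝟙_ V ≫ (ρ_ _).hom = (ρ_ _).hom ≫ f.1; simp)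
  pentagon p q r s := Subtype.ext (MonoidalCategory.pentagon p.V q.V r.V s.V)
  triangle p q := Subtype.ext (MonoidalCategory.triangle p.V q.V)


/-- For a monoidal functor `G : M ⥤ V`, the relative Drinfeld center
`Z^G(M)` is a monoidal category with
`(V, c^V) ⊗ (W, c^W) = (V ⊗ W, c^{V⊗W})`,
`c^{V⊗W}_X = α ∘ (c^V_X ⊗ Id) ∘ α⁻¹ ∘ (Id ⊗ c^W_X) ∘ α`, and the forgetful functor
to the underlying data is strict monoidal on the centralizing data. -/
theorem stmt_4 :
    ∃ hcl : ∀ p q : RelCenter G,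
      (∀ {X Y : M} (f : X ⟶ Y),
        ((p.V ⊗ q.V) ◁ G.map f) ≫ (tensorβ p q Y).hom =
          (tensorβ p q X).hom ≫ (G.map f ▷ (p.V ⊗ q.V))) ∧
      (∀ X Y : M,
        (tensorβ p q (X ⊗ Y)).hom = ((p.V ⊗ q.V) ◁ OplaxMonoidal.δ G X Y) ≫
          (α_ (p.V ⊗ q.V) (G.obj X) (G.obj Y)).inv ≫
          ((tensorβ p q X).hom ▷ G.obj Y) ≫
          (α_ (G.obj X) (p.V ⊗ q.V) (G.obj Y)).hom ≫
          (G.obj X ◁ (tensorβ p q Y).hom) ≫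
          (α_ (G.obj X) (G.obj Y) (p.V ⊗ q.V)).inv ≫
          (LaxMonoidal.μ G X Y ▷ (p.V ⊗ q.V))),
    ∃ hu : (∀ {X Y : M} (f : X ⟶ Y),
        ((𝟙_ V) ◁ G.map f) ≫ (unitβ (G := G) Y).hom =
          (unitβ (G := G) X).hom ≫ (G.map f ▷ (𝟙_ V))) ∧
      (∀ X Y : M,
        (unitβ (G := G) (X ⊗ Y)).hom = ((𝟙_ V) ◁ OplaxMonoidal.δ G X Y) ≫
          (α_ (𝟙_ V) (G.obj X) (G.obj Y)).inv ≫
          ((unitβ (G := G) X).hom ▷ G.obj Y) ≫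
          (α_ (G.obj X) (𝟙_ V) (G.obj Y)).hom ≫
          (G.obj X ◁ (unitβ (G := G) Y).hom) ≫
          (α_ (G.obj X) (G.obj Y) (𝟙_ V)).inv ≫
          (LaxMonoidal.μ G X Y ▷ (𝟙_ V))),
    ∃ inst : MonoidalCategory (RelCenter G),
      (∀ p q : RelCenter G,
        inst.tensorObj p q = ⟨p.V ⊗ q.V, tensorβ p q, (hcl p q).1, (hcl p q).2⟩) ∧
      (inst.tensorUnit = ⟨𝟙_ V, unitβ, hu.1, hu.2⟩) := by
  exact ⟨fun p q => ⟨tensorβ_natural p q, tensorβ_monoidal p q⟩,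
    ⟨unitβ_natural, unitβ_monoidal⟩, relMonoidal, fun p q => rfl, rfl⟩
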